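/- For all integers p ≥ 1 and n ≥ 3, A(p,n,n−1)^2 ≥ A(p,n,n) · A(p,n,n−2). -/

import Mathlib

/-- `A p n k` is the number of `p`-tuples of pairwise commuting permutations of
`{1,…,n}` whose generated subgroup acts on `{1,…,n}` with exactly `k` orbits. -/
noncomputable def A (p n k : ℕ) : ℕ :=
  Nat.card {σ : Fin p → Equiv.Perm (Fin n) //
    (∀ i j, Commute (σ i) (σ j)) ∧
    Nat.card (MulAction.orbitRel.Quotient
      (Subgroup.closure (Set.range σ)) (Fin n)) = k}

open Equiv MulAction Subgroup

namespace S15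

variable {n p : ℕ}

lemma fix_closure {S : Set (Perm (Fin n))} {z : Fin n}
    (hz : ∀ s ∈ S, s z = z) {g : Perm (Fin n)} (hg : g ∈ closure S) : g z = z := by
  induction hg using closure_induction with
  | mem x hx => exact hz x hx
  | one => rfl
  | mul x y hx hy ihx ihy => simp only [Perm.mul_apply, ihy, ihx]
  | inv x hx ih =>
    conv_lhs => rw [← ih]
    exact x.symm_apply_apply z

lemma commute_closure {S : Set (Perm (Fin n))} {x : Perm (Fin n)}
    (h : ∀ s ∈ S, Commute x s) {g : Perm (Fin n)} (hg : g ∈ closure S) : Commute x g := by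
  induction hg using closure_induction with
  | mem y hy => exact h y hy
  | one => exact Commute.one_right x
  | mul a b ha hb iha ihb => exact iha.mul_right ihb
  | inv a ha ih => exact ih.inv_right

lemma sum_card_orbits (G : Subgroup (Perm (Fin n))) [Fintype (orbitRel.Quotient G (Fin n))] :
    ∑ ω : orbitRel.Quotient G (Fin n), Nat.card ω.orbit = n := by
  classical
  haveI : ∀ ω : orbitRel.Quotient G (Fin n), Fintype ω.orbit := fun _ => Fintype.ofFinite _
  have h := Fintype.card_congr (selfEquivSigmaOrbits' G (Fin n))
  rw [Fintype.card_fin, Fintype.card_sigma] at h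
  calc ∑ ω : orbitRel.Quotient G (Fin n), Nat.card ω.orbit
      = ∑ ω : orbitRel.Quotient G (Fin n), Fintype.card ω.orbit :=
        Finset.sum_congr rfl fun ω _ => Nat.card_eq_fintype_card
    _ = n := h.symm

lemma orbit_card_pos (G : Subgroup (Perm (Fin n))) (ω : orbitRel.Quotient G (Fin n)) :
    1 ≤ Nat.card ω.orbit := by
  have h := ω.nonempty_orbit
  have : Nonempty ω.orbit := h.to_subtype
  exact Nat.one_le_iff_ne_zero.mpr (Nat.card_ne_zero.mpr ⟨this, Set.toFinite _⟩)

lemma quot_eq_of_mem (G : Subgroup (Perm (Fin n))) {z z' : Fin n} (h : z' ∈ orbit G z) :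
    (Quotient.mk'' z' : orbitRel.Quotient G (Fin n)) = Quotient.mk'' z :=
  Quotient.sound' h

lemma orbit_eq_singleton_of_card_one (G : Subgroup (Perm (Fin n))) {z : Fin n}
    (h : Nat.card (orbitRel.Quotient.orbit (Quotient.mk'' z : orbitRel.Quotient G (Fin n))) = 1) :
    orbit G z = {z} := by
  rw [orbitRel.Quotient.orbit_mk, Nat.card_coe_set_eq, Set.ncard_eq_one] at h
  obtain ⟨a, ha⟩ := h
  have hz : z ∈ orbit G z := mem_orbit_self z
  rw [ha] at hz ⊢
  simp_all

lemma card_quot_of_all_fixed {G : Subgroup (Perm (Fin n))}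
    (h : ∀ g ∈ G, ∀ z : Fin n, g z = z) :
    Nat.card (orbitRel.Quotient G (Fin n)) = n := by
  classical
  haveI : Fintype (orbitRel.Quotient G (Fin n)) := Fintype.ofFinite _
  have horb : ∀ ω : orbitRel.Quotient G (Fin n), Nat.card ω.orbit = 1 := by
    intro ω
    induction ω using Quotient.inductionOn' with
    | h z =>
      have hs : orbit G z = {z} := by
        apply Set.eq_singleton_iff_unique_mem.mpr
        refine ⟨mem_orbit_self z, ?_⟩
        rintro w ⟨g, rfl⟩
        exact h g g.2 z
      have : orbitRel.Quotient.orbit (Quotient.mk'' z : orbitRel.Quotient G (Fin n))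
          = ({z} : Set (Fin n)) := by rw [orbitRel.Quotient.orbit_mk, hs]
      rw [this]
      simp
  have hsum := sum_card_orbits G
  rw [Finset.sum_congr rfl (fun ω _ => horb ω)] at hsum
  simpa [Nat.card_eq_fintype_card] using hsum

-- all orbits of size one except one of size 2 (x,y in same orbit) => n-1 classes
lemma card_quot_swaplike {G : Subgroup (Perm (Fin n))} {x y : Fin n} (hxy : x ≠ y)
    (hG : ∀ g ∈ G, g = 1 ∨ g = swap x y) (hsw : swap x y ∈ G) :
    Nat.card (orbitRel.Quotient G (Fin n)) = n - 1 := by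
  classical
  haveI : Fintype (orbitRel.Quotient G (Fin n)) := Fintype.ofFinite _
  set ω0 : orbitRel.Quotient G (Fin n) := Quotient.mk'' x with hω0
  have horbx : orbit G x = {x, y} := by
    apply Set.Subset.antisymm
    · rintro w ⟨g, rfl⟩
      rcases hG g g.2 with h1 | h1 <;>
        simp [Subgroup.smul_def, Equiv.Perm.smul_def, h1, swap_apply_left]
    · rintro w hw
      simp only [Set.mem_insert_iff, Set.mem_singleton_iff] at hw
      obtain rfl | hy := hw
      · exact mem_orbit_self _
      · rw [hy]
        exact ⟨⟨swap x y, hsw⟩, swap_apply_left x y⟩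
  have horb0 : Nat.card (orbitRel.Quotient.orbit ω0) = 2 := by
    rw [hω0, orbitRel.Quotient.orbit_mk, horbx, Nat.card_coe_set_eq, Set.ncard_pair hxy]
  have horb : ∀ ω : orbitRel.Quotient G (Fin n), ω ≠ ω0 → Nat.card ω.orbit = 1 := by
    intro ω hω
    induction ω using Quotient.inductionOn' with
    | h z =>
      have hzx : z ≠ x := by rintro rfl; exact hω rfl
      have hzy : z ≠ y := by
        rintro rfl
        exact hω (quot_eq_of_mem G (horbx ▸ (Set.mem_insert_iff.mpr (Or.inr rfl))))
      have hs : orbit G z = {z} := by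
        apply Set.eq_singleton_iff_unique_mem.mpr
        refine ⟨mem_orbit_self z, ?_⟩
        rintro w ⟨g, rfl⟩
        rcases hG g g.2 with h1 | h1 <;>
          simp [Subgroup.smul_def, Equiv.Perm.smul_def, h1, swap_apply_of_ne_of_ne hzx hzy]
      have : orbitRel.Quotient.orbit (Quotient.mk'' z : orbitRel.Quotient G (Fin n))
          = ({z} : Set (Fin n)) := by rw [orbitRel.Quotient.orbit_mk, hs]
      rw [this]; simp
  have hsum := sum_card_orbits G
  rw [← Finset.sum_erase_add _ _ (Finset.mem_univ ω0)] at hsum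
  rw [Finset.sum_congr rfl (fun ω hω => horb ω (Finset.ne_of_mem_erase hω))] at hsum
  rw [Finset.sum_const, smul_eq_mul, mul_one, horb0] at hsum
  rw [Finset.card_erase_of_mem (Finset.mem_univ ω0), Finset.card_univ] at hsum
  have hcard : 1 ≤ Fintype.card (orbitRel.Quotient G (Fin n)) :=
    Fintype.card_pos_iff.mpr ⟨ω0⟩
  rw [Nat.card_eq_fintype_card]
  omega


/-- tuple of permutations: `swap x y` at positions where `f` is true, else 1 -/
def swapT (n p : ℕ) (x y : Fin n) (f : Fin p → Bool) : Fin p → Perm (Fin n) :=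
  fun i => if f i then swap x y else 1

lemma mem_closure_swap {x y : Fin n} {S : Set (Perm (Fin n))}
    (hS : S ⊆ {1, swap x y}) {g : Perm (Fin n)} (hg : g ∈ closure S) :
    g = 1 ∨ g = swap x y := by
  induction hg using closure_induction with
  | mem s hs => exact hS hs
  | one => exact Or.inl rfl
  | mul a b ha hb iha ihb =>
    rcases iha with rfl | rfl <;> rcases ihb with rfl | rfl <;>
      simp [swap_mul_self]
  | inv a ha ih => rcases ih with rfl | rfl <;> simp

lemma swapT_range_subset (x y : Fin n) (f : Fin p → Bool) :
    Set.range (swapT n p x y f) ⊆ {1, swap x y} := by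
  rintro s ⟨i, rfl⟩
  by_cases h : f i = true <;> simp [swapT, h]

lemma swapT_comm (x y : Fin n) (f : Fin p → Bool) :
    ∀ i j, Commute (swapT n p x y f i) (swapT n p x y f j) := by
  intro i j
  unfold swapT
  split_ifs <;> simp [Commute.refl]

lemma swapT_card {x y : Fin n} (hxy : x ≠ y) {f : Fin p → Bool} (hf : ∃ i, f i = true) :
    Nat.card (orbitRel.Quotient (closure (Set.range (swapT n p x y f))) (Fin n)) = n - 1 := by
  apply card_quot_swaplike hxy
  · intro g hg
    exact mem_closure_swap (swapT_range_subset x y f) hg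
  · obtain ⟨i, hi⟩ := hf
    apply Subgroup.subset_closure
    exact ⟨i, by simp [swapT, hi]⟩

lemma swap_eq_swap {x y x' y' : Fin n} (h1 : x < y) (h2 : x' < y')
    (hsw : swap x y = swap x' y') : x = x' ∧ y = y' := by
  have h3 : swap x y x' = y' := by rw [hsw]; exact swap_apply_left _ _
  by_cases hx : x' = x
  · subst hx
    rw [swap_apply_left] at h3
    exact ⟨rfl, h3⟩
  · by_cases hy : x' = y
    · subst hy
      rw [swap_apply_right] at h3
      subst h3
      exact absurd (h2.trans h1) (lt_irrefl _)
    · rw [swap_apply_of_ne_of_ne hx hy] at h3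
      exact absurd h3 (ne_of_lt h2)

lemma swapT_inj {x y x' y' : Fin n} {f f' : Fin p → Bool} (h1 : x < y) (h2 : x' < y')
    (hf : ∃ i, f i = true) (h : swapT n p x y f = swapT n p x' y' f') :
    x = x' ∧ y = y' ∧ f = f' := by
  have hne : x ≠ y := ne_of_lt h1
  have hne' : x' ≠ y' := ne_of_lt h2
  obtain ⟨i0, hi0⟩ := hf
  have hsw : swap x y = swap x' y' := by
    have := congrFun h i0
    unfold swapT at this
    rw [if_pos hi0] at this
    by_cases hfi' : f' i0 = true
    · rwa [if_pos hfi'] at this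
    · rw [if_neg hfi'] at this
      exact absurd (swap_eq_one_iff.mp this) hne
  obtain ⟨rfl, rfl⟩ := swap_eq_swap h1 h2 hsw
  refine ⟨rfl, rfl, funext fun i => ?_⟩
  have hthis := congrFun h i
  unfold swapT at hthis
  cases hfi : f i <;> cases hfi' : f' i <;> rw [hfi, hfi'] at hthis
  · simp only [Bool.false_eq_true, if_false, if_true] at hthis
    exact absurd (swap_eq_one_iff.mp hthis.symm) hne
  · simp only [Bool.false_eq_true, if_false, if_true] at hthis
    exact absurd (swap_eq_one_iff.mp hthis) hne

lemma sum2_cases {α : Type*} [DecidableEq α] (s : Finset α) (g : α → ℕ)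
    (h : ∑ a ∈ s, g a = 2) :
    (∃ a ∈ s, g a = 2 ∧ ∀ b ∈ s, b ≠ a → g b = 0) ∨
    (∃ a ∈ s, ∃ b ∈ s, a ≠ b ∧ g a = 1 ∧ g b = 1 ∧
      ∀ c ∈ s, c ≠ a → c ≠ b → g c = 0) := by
  classical
  set T := s.filter (fun a => g a ≠ 0) with hT
  have hsumT : ∑ a ∈ T, g a = 2 := by
    rw [hT, Finset.sum_filter_ne_zero]; exact h
  have hTsub : T ⊆ s := Finset.filter_subset _ _
  have hzero : ∀ b ∈ s, b ∉ T → g b = 0 := by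
    intro b hb hbT
    by_contra hgb
    exact hbT (Finset.mem_filter.mpr ⟨hb, hgb⟩)
  have hcard : T.card ≤ 2 := by
    have h1 : T.card • 1 ≤ ∑ a ∈ T, g a := by
      apply Finset.card_nsmul_le_sum
      intro a ha
      have := (Finset.mem_filter.mp ha).2
      omega
    simpa [hsumT] using h1
  have hne : T.Nonempty := by
    by_contra hTe
    rw [Finset.not_nonempty_iff_eq_empty] at hTe
    rw [hTe, Finset.sum_empty] at hsumT
    omega
  interval_cases hc : T.card
  · exact absurd (Finset.card_eq_zero.mp hc) (Finset.nonempty_iff_ne_empty.mp hne)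
  · obtain ⟨a, ha⟩ := Finset.card_eq_one.mp hc
    left
    refine ⟨a, hTsub (ha ▸ Finset.mem_singleton_self a), ?_, ?_⟩
    · rw [ha, Finset.sum_singleton] at hsumT; exact hsumT
    · intro b hb hba
      apply hzero b hb
      rw [ha, Finset.mem_singleton]
      exact hba
  · obtain ⟨a, b, hab, hT2⟩ := Finset.card_eq_two.mp hc
    have haT : a ∈ T := hT2 ▸ Finset.mem_insert_self a {b}
    have hbT : b ∈ T := hT2 ▸ Finset.mem_insert_of_mem (Finset.mem_singleton_self b)
    have hga : g a ≠ 0 := (Finset.mem_filter.mp haT).2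
    have hgb : g b ≠ 0 := (Finset.mem_filter.mp hbT).2
    rw [hT2, Finset.sum_pair hab] at hsumT
    right
    refine ⟨a, hTsub haT, b, hTsub hbT, hab, by omega, by omega, ?_⟩
    intro c hc' hca hcb
    apply hzero c hc'
    rw [hT2, Finset.mem_insert, Finset.mem_singleton]
    rintro (rfl | rfl) <;> [exact hca rfl; exact hcb rfl]

lemma shape (G : Subgroup (Perm (Fin n))) (hn : 3 ≤ n)
    (h : Nat.card (orbitRel.Quotient G (Fin n)) = n - 2) :
    (∃ z : Fin n, (orbit G z).ncard = 3 ∧ ∀ w : Fin n, w ∉ orbit G z → orbit G w = {w})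
    ∨ (∃ z1 z2 : Fin n, (orbit G z1).ncard = 2 ∧ (orbit G z2).ncard = 2 ∧
        orbit G z1 ∩ orbit G z2 = ∅ ∧
        ∀ w : Fin n, w ∉ orbit G z1 → w ∉ orbit G z2 → orbit G w = {w}) := by
  classical
  haveI : Fintype (orbitRel.Quotient G (Fin n)) := Fintype.ofFinite _
  have hsum := sum_card_orbits G
  have hcardQ : Fintype.card (orbitRel.Quotient G (Fin n)) = n - 2 := by
    rw [← Nat.card_eq_fintype_card]; exact h
  set g : orbitRel.Quotient G (Fin n) → ℕ := fun ω => Nat.card ω.orbit - 1 with hg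
  have hpos := orbit_card_pos G
  have hsplit : ∑ ω : orbitRel.Quotient G (Fin n), Nat.card ω.orbit
      = (∑ ω : orbitRel.Quotient G (Fin n), g ω) + Fintype.card (orbitRel.Quotient G (Fin n)) := by
    have heach : ∀ ω : orbitRel.Quotient G (Fin n), Nat.card ω.orbit = g ω + 1 := by
      intro ω
      have h1 := hpos ω
      have h2 : g ω = Nat.card ω.orbit - 1 := rfl
      omega
    rw [Finset.sum_congr rfl (fun ω _ => heach ω), Finset.sum_add_distrib,
      Finset.sum_const, Finset.card_univ, smul_eq_mul, mul_one]
  have hsum2 : ∑ ω : orbitRel.Quotient G (Fin n), g ω = 2 := by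
    rw [hsplit, hcardQ] at hsum
    omega
  -- translation tools
  have horbout : ∀ ω : orbitRel.Quotient G (Fin n), ω.orbit = orbit G ω.out :=
    fun ω => orbitRel.Quotient.orbit_eq_orbit_out ω Quotient.out_eq'
  have hmem : ∀ (ω : orbitRel.Quotient G (Fin n)) (w : Fin n),
      w ∈ orbit G ω.out → (Quotient.mk'' w : orbitRel.Quotient G (Fin n)) = ω := by
    intro ω w hw
    rw [← horbout] at hw
    exact orbitRel.Quotient.mem_orbit.mp hw
  rcases sum2_cases Finset.univ g hsum2 with ⟨ω0, _, hg0, hrest⟩ | ⟨ω1, _, ω2, _, h12, hg1, hg2, hrest⟩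
  · left
    refine ⟨ω0.out, ?_, ?_⟩
    · have := hpos ω0
      have hg0' : Nat.card ω0.orbit - 1 = 2 := hg0
      have h3 : Nat.card ω0.orbit = 3 := by omega
      rw [horbout] at h3
      rwa [Nat.card_coe_set_eq] at h3
    · intro w hw
      have hne : (Quotient.mk'' w : orbitRel.Quotient G (Fin n)) ≠ ω0 := by
        intro hc
        apply hw
        rw [← horbout, orbitRel.Quotient.mem_orbit]
        exact hc
      have hr : Nat.card (orbitRel.Quotient.orbit
          (Quotient.mk'' w : orbitRel.Quotient G (Fin n))) - 1 = 0 :=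
        hrest _ (Finset.mem_univ _) hne
      have h1 : Nat.card (orbitRel.Quotient.orbit
          (Quotient.mk'' w : orbitRel.Quotient G (Fin n))) = 1 := by
        have := hpos (Quotient.mk'' w : orbitRel.Quotient G (Fin n))
        omega
      exact orbit_eq_singleton_of_card_one G h1
  · right
    refine ⟨ω1.out, ω2.out, ?_, ?_, ?_, ?_⟩
    · have := hpos ω1
      have hg1' : Nat.card ω1.orbit - 1 = 1 := hg1
      have h2 : Nat.card ω1.orbit = 2 := by omega
      rw [horbout] at h2
      rwa [Nat.card_coe_set_eq] at h2
    · have := hpos ω2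
      have hg2' : Nat.card ω2.orbit - 1 = 1 := hg2
      have h2 : Nat.card ω2.orbit = 2 := by omega
      rw [horbout] at h2
      rwa [Nat.card_coe_set_eq] at h2
    · ext w
      simp only [Set.mem_inter_iff, Set.mem_empty_iff_false, iff_false, not_and]
      intro hw1 hw2
      exact h12 ((hmem ω1 w hw1).symm.trans (hmem ω2 w hw2))
    · intro w hw1 hw2
      have hne1 : (Quotient.mk'' w : orbitRel.Quotient G (Fin n)) ≠ ω1 := by
        intro hc; apply hw1; rw [← horbout, orbitRel.Quotient.mem_orbit]; exact hc
      have hne2 : (Quotient.mk'' w : orbitRel.Quotient G (Fin n)) ≠ ω2 := by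
        intro hc; apply hw2; rw [← horbout, orbitRel.Quotient.mem_orbit]; exact hc
      have hr : Nat.card (orbitRel.Quotient.orbit
          (Quotient.mk'' w : orbitRel.Quotient G (Fin n))) - 1 = 0 :=
        hrest _ (Finset.mem_univ _) hne1 hne2
      have h1 : Nat.card (orbitRel.Quotient.orbit
          (Quotient.mk'' w : orbitRel.Quotient G (Fin n))) = 1 := by
        have := hpos (Quotient.mk'' w : orbitRel.Quotient G (Fin n))
        omega
      exact orbit_eq_singleton_of_card_one G h1

section sigma

variable {σ : Fin p → Perm (Fin n)}

lemma commute_mem_closure_range (hc : ∀ i j, Commute (σ i) (σ j)) (i : Fin p)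
    {g : Perm (Fin n)} (hg : g ∈ closure (Set.range σ)) : Commute (σ i) g :=
  commute_closure (by rintro s ⟨j, rfl⟩; exact hc i j) hg

lemma rigid (hc : ∀ i j, Commute (σ i) (σ j)) {i : Fin p} {a z : Fin n}
    (ha : σ i a = a) (hz : z ∈ orbit (closure (Set.range σ)) a) : σ i z = z := by
  obtain ⟨g, rfl⟩ := hz
  have hcg := commute_mem_closure_range hc i g.2
  have hmul : σ i ((g : Perm (Fin n)) a) = (g : Perm (Fin n)) (σ i a) := by
    have := congrFun (congrArg (fun e => e.toFun) hcg) a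
    simpa [Perm.mul_apply] using this
  show σ i ((g : Perm (Fin n)) a) = (g : Perm (Fin n)) a
  rw [hmul, ha]

lemma apply_mem_orbit (i : Fin p) (z : Fin n) :
    σ i z ∈ orbit (closure (Set.range σ)) z :=
  ⟨⟨σ i, Subgroup.subset_closure ⟨i, rfl⟩⟩, rfl⟩

lemma apply_mem_orbit_of_mem {i : Fin p} {z w : Fin n}
    (h : w ∈ orbit (closure (Set.range σ)) z) :
    σ i w ∈ orbit (closure (Set.range σ)) z := by
  rw [← orbit_eq_iff.mpr h]
  exact apply_mem_orbit i w

lemma exists_moving {a z : Fin n} (hz : z ∈ orbit (closure (Set.range σ)) a) (hza : z ≠ a) :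
    ∃ i, σ i a ≠ a := by
  by_contra hall
  push_neg at hall
  obtain ⟨g, hg⟩ := hz
  apply hza
  rw [← hg]
  exact fix_closure (by rintro s ⟨i, rfl⟩; exact hall i) g.2

/-- the 3-cycle x ↦ y ↦ z ↦ x -/
def cyc (x y z : Fin n) : Perm (Fin n) := swap x z * swap x y

lemma cyc_fst {x y z : Fin n} (hxy : x ≠ y) (hyz : y ≠ z) : cyc x y z x = y := by
  simp [cyc, Perm.mul_apply, swap_apply_left, swap_apply_of_ne_of_ne hxy.symm hyz]

lemma cyc_snd {x y z : Fin n} : cyc x y z y = z := by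
  simp [cyc, Perm.mul_apply, swap_apply_right, swap_apply_left]

lemma cyc_thd {x y z : Fin n} (hxz : x ≠ z) (hyz : y ≠ z) : cyc x y z z = x := by
  simp [cyc, Perm.mul_apply, swap_apply_right,
    swap_apply_of_ne_of_ne hxz.symm hyz.symm]

lemma cyc_other {x y z w : Fin n} (hwx : w ≠ x) (hwy : w ≠ y) (hwz : w ≠ z) :
    cyc x y z w = w := by
  simp [cyc, Perm.mul_apply, swap_apply_of_ne_of_ne hwx hwy,
    swap_apply_of_ne_of_ne hwx hwz]

lemma step3 (hc : ∀ i j, Commute (σ i) (σ j)) {a b c : Fin n}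
    (hab : a ≠ b) (hac : a ≠ c) (hbc : b ≠ c)
    (horb : orbit (closure (Set.range σ)) a = {a, b, c})
    (htriv : ∀ w : Fin n, w ∉ ({a, b, c} : Set (Fin n)) →
      orbit (closure (Set.range σ)) w = {w})
    {i : Fin p} (h1 : σ i a = b) : σ i = cyc a b c := by
  have hfixout : ∀ w : Fin n, w ∉ ({a, b, c} : Set (Fin n)) → σ i w = w := by
    intro w hw
    have h2 := apply_mem_orbit (σ := σ) i w
    rw [htriv w hw] at h2
    exact h2
  have horbw : ∀ w ∈ ({a, b, c} : Set (Fin n)),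
      orbit (closure (Set.range σ)) w = {a, b, c} := by
    intro w hw
    rw [orbit_eq_iff.mpr (horb ▸ hw), horb]
  have hin : ∀ w ∈ ({a, b, c} : Set (Fin n)), σ i w ∈ ({a, b, c} : Set (Fin n)) := by
    intro w hw
    rw [← horbw w hw]
    exact apply_mem_orbit i w
  have hnofix : ∀ w ∈ ({a, b, c} : Set (Fin n)), σ i w ≠ w := by
    intro w hw hfix
    have hfa : σ i a = a := rigid hc hfix (by rw [horbw w hw]; simp)
    rw [hfa] at h1
    exact hab h1
  have hib : σ i b = c := by
    have h2 := hin b (by simp)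
    simp only [Set.mem_insert_iff, Set.mem_singleton_iff] at h2
    rcases h2 with h2 | h2 | h2
    · exfalso
      have h3 := hin c (by simp)
      simp only [Set.mem_insert_iff, Set.mem_singleton_iff] at h3
      rcases h3 with h3 | h3 | h3
      · exact hbc ((σ i).injective (h2.trans h3.symm))
      · exact hac ((σ i).injective (h1.trans h3.symm))
      · exact hnofix c (by simp) h3
    · exact (hnofix b (by simp) h2).elim
    · exact h2
  have hic : σ i c = a := by
    have h2 := hin c (by simp)
    simp only [Set.mem_insert_iff, Set.mem_singleton_iff] at h2
    rcases h2 with h2 | h2 | h2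
    · exact h2
    · exact ((hac ((σ i).injective (h1.trans h2.symm))).elim)
    · exact (hnofix c (by simp) h2).elim
  apply Equiv.ext
  intro w
  by_cases hw : w ∈ ({a, b, c} : Set (Fin n))
  · simp only [Set.mem_insert_iff, Set.mem_singleton_iff] at hw
    rcases hw with rfl | rfl | rfl
    · rw [h1, cyc_fst hab hbc]
    · rw [hib, cyc_snd]
    · rw [hic, cyc_thd hac hbc]
  · simp only [Set.mem_insert_iff, Set.mem_singleton_iff, not_or] at hw
    rw [hfixout w (by simp [hw.1, hw.2.1, hw.2.2]),
      cyc_other hw.1 hw.2.1 hw.2.2]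

lemma classify3 (hc : ∀ i j, Commute (σ i) (σ j)) {a b c : Fin n}
    (hab : a ≠ b) (hac : a ≠ c) (hbc : b ≠ c)
    (horb : orbit (closure (Set.range σ)) a = {a, b, c})
    (htriv : ∀ w : Fin n, w ∉ ({a, b, c} : Set (Fin n)) →
      orbit (closure (Set.range σ)) w = {w}) :
    (∃ i, σ i a ≠ a) ∧
    ∀ i, σ i = if σ i a = a then 1 else if σ i a = b then cyc a b c else cyc a c b := by
  have hsetcomm : ({a, b, c} : Set (Fin n)) = {a, c, b} := by
    ext w; simp only [Set.mem_insert_iff, Set.mem_singleton_iff]; tauto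
  have hmem_b : b ∈ orbit (closure (Set.range σ)) a := by rw [horb]; simp
  refine ⟨exists_moving hmem_b (Ne.symm hab), fun i => ?_⟩
  by_cases h1 : σ i a = a
  · rw [if_pos h1]
    apply Equiv.ext
    intro w
    simp only [Perm.one_apply]
    by_cases hw : w ∈ ({a, b, c} : Set (Fin n))
    · exact rigid hc h1 (by rw [horb]; exact hw)
    · have h2 := apply_mem_orbit (σ := σ) i w
      rw [htriv w hw] at h2
      exact h2
  · rw [if_neg h1]
    have h2 := apply_mem_orbit_of_mem (i := i) (horb ▸ Set.mem_insert a {b, c})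
    rw [horb] at h2
    simp only [Set.mem_insert_iff, Set.mem_singleton_iff] at h2
    rcases h2 with h2 | h2 | h2
    · exact absurd h2 h1
    · rw [if_pos h2]
      exact step3 hc hab hac hbc horb htriv h2
    · rw [if_neg (by rw [h2]; exact Ne.symm hbc)]
      exact step3 hc hac hab (Ne.symm hbc) (hsetcomm ▸ horb)
        (by rw [← hsetcomm]; exact htriv) h2

lemma step2 (hc : ∀ i j, Commute (σ i) (σ j)) {a b : Fin n} (hab : a ≠ b)
    (horb : orbit (closure (Set.range σ)) a = {a, b}) (i : Fin p) :
    (σ i a = a ∧ σ i b = b) ∨ (σ i a = b ∧ σ i b = a) := by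
  have hmem_b : b ∈ orbit (closure (Set.range σ)) a := by rw [horb]; simp
  have h2 := apply_mem_orbit (σ := σ) i a
  rw [horb] at h2
  simp only [Set.mem_insert_iff, Set.mem_singleton_iff] at h2
  rcases h2 with h2 | h2
  · exact Or.inl ⟨h2, rigid hc h2 hmem_b⟩
  · right
    refine ⟨h2, ?_⟩
    have h3 := apply_mem_orbit_of_mem (i := i) hmem_b
    rw [horb] at h3
    simp only [Set.mem_insert_iff, Set.mem_singleton_iff] at h3
    rcases h3 with h3 | h3
    · exact h3
    · exact absurd ((σ i).injective (h3.trans h2.symm)) (fun h => hab h.symm)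

lemma classify2 (hc : ∀ i j, Commute (σ i) (σ j)) {a b c d : Fin n}
    (hab : a ≠ b) (hcd : c ≠ d) (hac : a ≠ c) (had : a ≠ d) (hbc : b ≠ c) (hbd : b ≠ d)
    (horb1 : orbit (closure (Set.range σ)) a = {a, b})
    (horb2 : orbit (closure (Set.range σ)) c = {c, d})
    (htriv : ∀ w : Fin n, w ∉ ({a, b} : Set (Fin n)) → w ∉ ({c, d} : Set (Fin n)) →
      orbit (closure (Set.range σ)) w = {w}) :
    (∃ i, σ i a ≠ a) ∧ (∃ i, σ i c ≠ c) ∧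
    ∀ i, σ i = (if σ i a = a then 1 else swap a b) * (if σ i c = c then 1 else swap c d) := by
  have hmem_b : b ∈ orbit (closure (Set.range σ)) a := by rw [horb1]; simp
  have hmem_d : d ∈ orbit (closure (Set.range σ)) c := by rw [horb2]; simp
  refine ⟨exists_moving hmem_b (Ne.symm hab), exists_moving hmem_d (Ne.symm hcd), fun i => ?_⟩
  have hstep1 := step2 hc hab horb1 i
  have hstep2 := step2 hc hcd horb2 i
  have hfab_c : ∀ u : Fin n, u ≠ a → u ≠ b →
      (if σ i a = a then (1 : Perm (Fin n)) else swap a b) u = u := by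
    intro u h1 h2
    split_ifs
    · rfl
    · exact swap_apply_of_ne_of_ne h1 h2
  have hfcd_c : ∀ u : Fin n, u ≠ c → u ≠ d →
      (if σ i c = c then (1 : Perm (Fin n)) else swap c d) u = u := by
    intro u h1 h2
    split_ifs
    · rfl
    · exact swap_apply_of_ne_of_ne h1 h2
  apply Equiv.ext
  intro w
  rw [Perm.mul_apply]
  by_cases hwa : w = a
  · rw [hwa, hfcd_c a hac had]
    rcases hstep1 with ⟨h1, _⟩ | ⟨h1, _⟩
    · rw [if_pos h1, h1]; rfl
    · rw [if_neg (by rw [h1]; exact fun h => hab h.symm), h1, swap_apply_left]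
  · by_cases hwb : w = b
    · rw [hwb, hfcd_c b hbc hbd]
      rcases hstep1 with ⟨h1, h2⟩ | ⟨h1, h2⟩
      · rw [if_pos h1, h2]; rfl
      · rw [if_neg (by rw [h1]; exact fun h => hab h.symm), h2, swap_apply_right]
    · by_cases hwc : w = c
      · rw [hwc]
        rcases hstep2 with ⟨h1, h2⟩ | ⟨h1, h2⟩
        · rw [if_pos h1, h1]
          exact (hfab_c c (Ne.symm hac) (Ne.symm hbc)).symm
        · rw [if_neg (show ¬((σ i) c = c) by rw [h1]; exact fun h => hcd h.symm),
            swap_apply_left, h1]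
          exact (hfab_c d (Ne.symm had) (Ne.symm hbd)).symm
      · by_cases hwd : w = d
        · rw [hwd]
          rcases hstep2 with ⟨h1, h2⟩ | ⟨h1, h2⟩
          · rw [if_pos h1, h2]
            exact (hfab_c d (Ne.symm had) (Ne.symm hbd)).symm
          · rw [if_neg (show ¬((σ i) c = c) by rw [h1]; exact fun h => hcd h.symm),
              swap_apply_right, h2]
            exact (hfab_c c (Ne.symm hac) (Ne.symm hbc)).symm
        · have hw1 : w ∉ ({a, b} : Set (Fin n)) := by simp [hwa, hwb]
          have hw2 : w ∉ ({c, d} : Set (Fin n)) := by simp [hwc, hwd]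
          have hfix : σ i w = w := by
            have h2 := apply_mem_orbit (σ := σ) i w
            rw [htriv w hw1 hw2] at h2
            exact h2
          rw [hfix, hfcd_c w hwc hwd]
          exact (hfab_c w hwa hwb).symm

lemma sort2 {x y : Fin n} (h : x ≠ y) :
    ∃ a b : Fin n, a < b ∧ ({x, y} : Set (Fin n)) = {a, b} := by
  rcases h.lt_or_gt with h' | h'
  · exact ⟨x, y, h', rfl⟩
  · exact ⟨y, x, h', Set.pair_comm x y⟩

lemma sort3 {x y z : Fin n} (hxy : x ≠ y) (hxz : x ≠ z) (hyz : y ≠ z) :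
    ∃ a b c : Fin n, a < b ∧ b < c ∧ ({x, y, z} : Set (Fin n)) = {a, b, c} := by
  rcases hxy.lt_or_gt with h1 | h1 <;> rcases hxz.lt_or_gt with h2 | h2 <;>
    rcases hyz.lt_or_gt with h3 | h3
  · exact ⟨x, y, z, h1, h3, rfl⟩
  · exact ⟨x, z, y, h2, h3, by ext w; simp only [Set.mem_insert_iff, Set.mem_singleton_iff]; tauto⟩
  · exact absurd (h1.trans h3) (fun h => lt_asymm h h2)
  · exact ⟨z, x, y, h2, h1, by ext w; simp only [Set.mem_insert_iff, Set.mem_singleton_iff]; tauto⟩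
  · exact ⟨y, x, z, h1, h2, by ext w; simp only [Set.mem_insert_iff, Set.mem_singleton_iff]; tauto⟩
  · exact absurd (h3.trans h1) (fun h => lt_asymm h h2)
  · exact ⟨y, z, x, h3, h2, by ext w; simp only [Set.mem_insert_iff, Set.mem_singleton_iff]; tauto⟩
  · exact ⟨z, y, x, h3, h1, by ext w; simp only [Set.mem_insert_iff, Set.mem_singleton_iff]; tauto⟩

lemma classify (hc : ∀ i j, Commute (σ i) (σ j)) (hn : 3 ≤ n)
    (horb : Nat.card (orbitRel.Quotient (closure (Set.range σ)) (Fin n)) = n - 2) :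
    (∃ a b c : Fin n, a < b ∧ b < c ∧ (∃ i, σ i a ≠ a) ∧
      ∀ i, σ i = if σ i a = a then 1 else if σ i a = b then cyc a b c else cyc a c b) ∨
    (∃ a b c d : Fin n, a < b ∧ c < d ∧ a < c ∧ a ≠ d ∧ b ≠ c ∧ b ≠ d ∧
      (∃ i, σ i a ≠ a) ∧ (∃ i, σ i c ≠ c) ∧
      ∀ i, σ i = (if σ i a = a then 1 else swap a b) * (if σ i c = c then 1 else swap c d)) := by
  rcases shape (closure (Set.range σ)) hn horb with ⟨z, hz3, htriv⟩ |
    ⟨z1, z2, hz1, hz2, hdisj, htriv⟩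
  · left
    obtain ⟨x, y, w, hxy, hxw, hyw, hset⟩ := Set.ncard_eq_three.mp hz3
    obtain ⟨a, b, c, hab, hbc, hsort⟩ := sort3 hxy hxw hyw
    rw [hsort] at hset
    have hmem_a : a ∈ orbit (closure (Set.range σ)) z := by rw [hset]; simp
    have horba : orbit (closure (Set.range σ)) a = {a, b, c} := by
      rw [orbit_eq_iff.mpr hmem_a, hset]
    have htriv' : ∀ u : Fin n, u ∉ ({a, b, c} : Set (Fin n)) →
        orbit (closure (Set.range σ)) u = {u} := by
      intro u hu
      exact htriv u (by rw [hset]; exact hu)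
    obtain ⟨hex, hform⟩ := classify3 hc (ne_of_lt hab) (ne_of_lt (hab.trans hbc))
      (ne_of_lt hbc) horba htriv'
    exact ⟨a, b, c, hab, hbc, hex, hform⟩
  · right
    obtain ⟨x1, y1, hxy1, hset1⟩ := Set.ncard_eq_two.mp hz1
    obtain ⟨x2, y2, hxy2, hset2⟩ := Set.ncard_eq_two.mp hz2
    obtain ⟨a, b, hab, hsort1⟩ := sort2 hxy1
    obtain ⟨c, d, hcd, hsort2⟩ := sort2 hxy2
    rw [hsort1] at hset1
    rw [hsort2] at hset2
    have horba : orbit (closure (Set.range σ)) a = {a, b} := by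
      rw [orbit_eq_iff.mpr (show a ∈ orbit (closure (Set.range σ)) z1 by rw [hset1]; simp), hset1]
    have horbc : orbit (closure (Set.range σ)) c = {c, d} := by
      rw [orbit_eq_iff.mpr (show c ∈ orbit (closure (Set.range σ)) z2 by rw [hset2]; simp), hset2]
    rw [hset1, hset2] at hdisj
    have hdisj' : ∀ u : Fin n, u ∈ ({a, b} : Set (Fin n)) → u ∈ ({c, d} : Set (Fin n)) → False := by
      intro u h1 h2
      have : u ∈ ({a, b} : Set (Fin n)) ∩ {c, d} := ⟨h1, h2⟩
      rw [hdisj] at this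
      exact this
    have hac : a ≠ c := fun h => hdisj' a (by simp) (by rw [h]; simp)
    have had : a ≠ d := fun h => hdisj' a (by simp) (by rw [h]; simp)
    have hbc : b ≠ c := fun h => hdisj' b (by simp) (by rw [h]; simp)
    have hbd : b ≠ d := fun h => hdisj' b (by simp) (by rw [h]; simp)
    have htriv' : ∀ u : Fin n, u ∉ ({a, b} : Set (Fin n)) → u ∉ ({c, d} : Set (Fin n)) →
        orbit (closure (Set.range σ)) u = {u} := by
      intro u h1 h2
      exact htriv u (by rw [hset1]; exact h1) (by rw [hset2]; exact h2)
    rcases hac.lt_or_gt with hlt | hlt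
    · obtain ⟨he1, he2, hform⟩ := classify2 hc (ne_of_lt hab) (ne_of_lt hcd)
        hac had hbc hbd horba horbc htriv'
      exact ⟨a, b, c, d, hab, hcd, hlt, had, hbc, hbd, he1, he2, hform⟩
    · obtain ⟨he1, he2, hform⟩ := classify2 hc (ne_of_lt hcd) (ne_of_lt hab)
        (Ne.symm hac) (Ne.symm hbc) (Ne.symm had) (Ne.symm hbd) horbc horba
        (fun u h1 h2 => htriv' u h2 h1)
      exact ⟨c, d, a, b, hcd, hab, hlt, Ne.symm hbc, Ne.symm had, Ne.symm hbd, he1, he2, hform⟩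

end sigma


/-- tuples with commuting entries and k orbits -/
def Tup (p n k : ℕ) :=
  {σ : Fin p → Perm (Fin n) // (∀ i j, Commute (σ i) (σ j)) ∧
    Nat.card (orbitRel.Quotient (closure (Set.range σ)) (Fin n)) = k}

instance (p n k : ℕ) : Finite (Tup p n k) := by
  unfold Tup
  infer_instance

noncomputable def Yel (p n : ℕ) (x y : Fin n) (f : Fin p → Bool) (hxy : x ≠ y)
    (hf : ∃ i, f i = true) : Tup p n (n - 1) :=
  ⟨swapT n p x y f, swapT_comm x y f, swapT_card hxy hf⟩

lemma Yel_eq {p n : ℕ} {x y x' y' : Fin n} {f f' : Fin p → Bool}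
    {hxy : x ≠ y} {hxy' : x' ≠ y'} {hf : ∃ i, f i = true} {hf' : ∃ i, f' i = true}
    (h1 : x < y) (h2 : x' < y')
    (h : Yel p n x y f hxy hf = Yel p n x' y' f' hxy' hf') : x = x' ∧ y = y' ∧ f = f' :=
  swapT_inj h1 h2 hf (congrArg Subtype.val h)

lemma orbits_trivial_of_card_quot_eq (G : Subgroup (Perm (Fin n)))
    (h : Nat.card (orbitRel.Quotient G (Fin n)) = n) (z : Fin n) :
    orbit G z = {z} := by
  classical
  haveI : Fintype (orbitRel.Quotient G (Fin n)) := Fintype.ofFinite _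
  have hsum := sum_card_orbits G
  have hpos := orbit_card_pos G
  have hcardQ : Fintype.card (orbitRel.Quotient G (Fin n)) = n := by
    rw [← Nat.card_eq_fintype_card]; exact h
  have hsplit : ∑ ω : orbitRel.Quotient G (Fin n), Nat.card ω.orbit
      = (∑ ω : orbitRel.Quotient G (Fin n), (Nat.card ω.orbit - 1)) +
        Fintype.card (orbitRel.Quotient G (Fin n)) := by
    have heach : ∀ ω : orbitRel.Quotient G (Fin n),
        Nat.card ω.orbit = (Nat.card ω.orbit - 1) + 1 := by
      intro ω; have := hpos ω; omega
    rw [Finset.sum_congr rfl (fun ω _ => heach ω), Finset.sum_add_distrib,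
      Finset.sum_const, Finset.card_univ, smul_eq_mul, mul_one]
  have hzero : ∑ ω : orbitRel.Quotient G (Fin n), (Nat.card ω.orbit - 1) = 0 := by
    rw [hsplit, hcardQ] at hsum
    omega
  have h1 : Nat.card (orbitRel.Quotient.orbit
      (Quotient.mk'' z : orbitRel.Quotient G (Fin n))) - 1 = 0 :=
    Finset.sum_eq_zero_iff.mp hzero _ (Finset.mem_univ _)
  have h2 := hpos (Quotient.mk'' z : orbitRel.Quotient G (Fin n))
  exact orbit_eq_singleton_of_card_one G (by omega)

lemma A_nn (p n : ℕ) : Nat.card (Tup p n n) = 1 := by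
  rw [Nat.card_eq_one_iff_unique]
  constructor
  · constructor
    intro S T
    apply Subtype.ext
    funext i
    have hS := orbits_trivial_of_card_quot_eq _ S.2.2
    have hT := orbits_trivial_of_card_quot_eq _ T.2.2
    apply Equiv.ext
    intro z
    have h1 := apply_mem_orbit (σ := S.1) i z
    have h2 := apply_mem_orbit (σ := T.1) i z
    rw [hS z] at h1
    rw [hT z] at h2
    rw [h1, h2]
  · refine ⟨⟨fun _ => 1, fun i j => Commute.refl 1, ?_⟩⟩
    apply card_quot_of_all_fixed
    intro g hg z
    apply fix_closure (S := Set.range fun _ : Fin p => (1 : Perm (Fin n)))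
    · rintro s ⟨i, rfl⟩; rfl
    · exact hg

lemma exists_inj (p n : ℕ) (hn : 3 ≤ n) :
    ∃ F : Tup p n (n - 2) → Tup p n (n - 1) × Tup p n (n - 1), Function.Injective F := by
  classical
  -- the encoding predicate
  set P : Tup p n (n - 2) → (Tup p n (n - 1) × Tup p n (n - 1)) → Prop := fun S yz =>
    (∃ (a b c : Fin n) (f g : Fin p → Bool) (h1 : a < b) (h2 : b < c)
        (hf : ∃ i, f i = true) (hg : ∃ i, g i = true),
      yz = (Yel p n a b f (ne_of_lt h1) hf, Yel p n a c g (ne_of_lt (h1.trans h2)) hg) ∧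
      ∀ i, S.1 i = if f i then (if g i then cyc a c b else cyc a b c) else 1) ∨
    (∃ (a b c : Fin n) (f : Fin p → Bool) (h1 : a < b) (h2 : b < c)
        (hf : ∃ i, f i = true),
      yz = (Yel p n a b f (ne_of_lt h1) hf, Yel p n b c f (ne_of_lt h2) hf) ∧
      ∀ i, S.1 i = if f i then cyc a b c else 1) ∨
    (∃ (a b c d : Fin n) (f g : Fin p → Bool) (h1 : a < b) (h2 : c < d) (h3 : a < c)
        (h4 : b ≠ c) (hf : ∃ i, f i = true) (hg : ∃ i, g i = true),
      yz = (Yel p n a b f (ne_of_lt h1) hf, Yel p n c d g (ne_of_lt h2) hg) ∧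
      ∀ i, S.1 i = (if f i then swap a b else 1) * (if g i then swap c d else 1))
    with hP
  have htotal : ∀ S, ∃ yz, P S yz := by
    intro S
    rcases classify S.2.1 hn S.2.2 with ⟨a, b, c, hab, hbc, hex, hform⟩ |
      ⟨a, b, c, d, hab, hcd, hac, had, hbc, hbd, hex1, hex2, hform⟩
    · set f : Fin p → Bool := fun i => decide (S.1 i a ≠ a) with hfdef
      have hf : ∃ i, f i = true := by
        obtain ⟨i, hi⟩ := hex
        exact ⟨i, decide_eq_true hi⟩
      have hfi : ∀ i, f i = true ↔ S.1 i a ≠ a := by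
        intro i; rw [hfdef]; simp
      by_cases hgx : ∃ i, S.1 i a = c
      · set g : Fin p → Bool := fun i => decide (S.1 i a = c) with hgdef
        have hg : ∃ i, g i = true := by
          obtain ⟨i, hi⟩ := hgx
          exact ⟨i, decide_eq_true hi⟩
        have hgi : ∀ i, g i = true ↔ S.1 i a = c := by
          intro i; rw [hgdef]; simp
        refine ⟨(Yel p n a b f (ne_of_lt hab) hf,
          Yel p n a c g (ne_of_lt (hab.trans hbc)) hg), Or.inl
          ⟨a, b, c, f, g, hab, hbc, hf, hg, rfl, ?_⟩⟩
        intro i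
        rw [hform i]
        by_cases hfa : S.1 i a = a
        · rw [if_pos hfa, if_neg (show ¬(f i = true) by rw [hfi]; simp [hfa])]
        · rw [if_neg hfa, if_pos (show f i = true from (hfi i).mpr hfa)]
          by_cases hgc : S.1 i a = c
          · rw [if_neg (show ¬(S.1 i a = b) by rw [hgc]; exact (ne_of_lt hbc).symm),
              if_pos (show g i = true from (hgi i).mpr hgc)]
          · rw [if_neg (show ¬(g i = true) by rw [hgi]; simp [hgc])]
            by_cases hb : S.1 i a = b
            · rw [if_pos hb]
            · exfalso
              have h5 := hform i
              rw [if_neg hfa, if_neg hb] at h5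
              apply hgc
              rw [h5]
              exact cyc_fst (ne_of_lt (hab.trans hbc)) (Ne.symm (ne_of_lt hbc))
      · push_neg at hgx
        refine ⟨(Yel p n a b f (ne_of_lt hab) hf, Yel p n b c f (ne_of_lt hbc) hf),
          Or.inr (Or.inl ⟨a, b, c, f, hab, hbc, hf, rfl, ?_⟩)⟩
        intro i
        rw [hform i]
        by_cases hfa : S.1 i a = a
        · rw [if_pos hfa, if_neg (show ¬(f i = true) by rw [hfi]; simp [hfa])]
        · rw [if_neg hfa, if_pos (show f i = true from (hfi i).mpr hfa)]
          by_cases hb : S.1 i a = b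
          · rw [if_pos hb]
          · exfalso
            have h5 := hform i
            rw [if_neg hfa, if_neg hb] at h5
            apply hgx i
            rw [h5]
            exact cyc_fst (ne_of_lt (hab.trans hbc)) (Ne.symm (ne_of_lt hbc))
    · set f : Fin p → Bool := fun i => decide (S.1 i a ≠ a) with hfdef
      set g : Fin p → Bool := fun i => decide (S.1 i c ≠ c) with hgdef
      have hf : ∃ i, f i = true := by
        obtain ⟨i, hi⟩ := hex1
        exact ⟨i, decide_eq_true hi⟩
      have hg : ∃ i, g i = true := by
        obtain ⟨i, hi⟩ := hex2
        exact ⟨i, decide_eq_true hi⟩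
      refine ⟨(Yel p n a b f (ne_of_lt hab) hf, Yel p n c d g (ne_of_lt hcd) hg),
        Or.inr (Or.inr ⟨a, b, c, d, f, g, hab, hcd, hac, hbc, hf, hg, rfl, ?_⟩)⟩
      intro i
      rw [hform i]
      congr 1
      · by_cases hfa : S.1 i a = a
        · rw [if_pos hfa, if_neg (show ¬(f i = true) by rw [hfdef]; simp [hfa])]
        · rw [if_neg hfa, if_pos (show f i = true by rw [hfdef]; simp [hfa])]
      · by_cases hfc : S.1 i c = c
        · rw [if_pos hfc, if_neg (show ¬(g i = true) by rw [hgdef]; simp [hfc])]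
        · rw [if_neg hfc, if_pos (show g i = true by rw [hgdef]; simp [hfc])]
  choose F hF using htotal
  refine ⟨F, fun S S' heq => ?_⟩
  have h1 := hF S
  have h2 := hF S'
  rw [heq] at h1
  apply Subtype.ext
  rcases h1 with ⟨a, b, c, f, g, hab, hbc, hf, hg, hyz, hrec⟩ |
    ⟨a, b, c, f, hab, hbc, hf, hyz, hrec⟩ |
    ⟨a, b, c, d, f, g, hab, hcd, haclt, hbcne, hf, hg, hyz, hrec⟩ <;>
  rcases h2 with ⟨a', b', c', f', g', hab', hbc', hf', hg', hyz', hrec'⟩ |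
    ⟨a', b', c', f', hab', hbc', hf', hyz', hrec'⟩ |
    ⟨a', b', c', d', f', g', hab', hcd', haclt', hbcne', hf', hg', hyz', hrec'⟩ <;>
  rw [hyz, Prod.mk.injEq] at hyz' <;>
  have e := hyz'
  · obtain ⟨rfl, rfl, rfl⟩ := Yel_eq hab hab' e.1
    obtain ⟨-, rfl, rfl⟩ := Yel_eq (hab.trans hbc) (hab'.trans hbc') e.2
    funext i
    rw [hrec i, hrec' i]
  · obtain ⟨rfl, rfl, rfl⟩ := Yel_eq hab hab' e.1
    exact absurd (Yel_eq (hab.trans hbc) hbc' e.2).1 (ne_of_lt hab)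
  · obtain ⟨rfl, rfl, rfl⟩ := Yel_eq hab hab' e.1
    exact absurd (Yel_eq (hab.trans hbc) hcd' e.2).1 (ne_of_lt haclt')
  · obtain ⟨rfl, rfl, rfl⟩ := Yel_eq hab hab' e.1
    exact absurd (Yel_eq hbc (hab'.trans hbc') e.2).1.symm (ne_of_lt hab)
  · obtain ⟨rfl, rfl, rfl⟩ := Yel_eq hab hab' e.1
    obtain ⟨-, rfl, -⟩ := Yel_eq hbc hbc' e.2
    funext i
    rw [hrec i, hrec' i]
  · obtain ⟨rfl, rfl, rfl⟩ := Yel_eq hab hab' e.1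
    exact absurd (Yel_eq hbc hcd' e.2).1 hbcne'
  · obtain ⟨rfl, rfl, rfl⟩ := Yel_eq hab hab' e.1
    exact absurd (Yel_eq hcd (hab'.trans hbc') e.2).1.symm (ne_of_lt haclt)
  · obtain ⟨rfl, rfl, rfl⟩ := Yel_eq hab hab' e.1
    exact absurd (Yel_eq hcd hbc' e.2).1.symm hbcne
  · obtain ⟨rfl, rfl, rfl⟩ := Yel_eq hab hab' e.1
    obtain ⟨rfl, rfl, rfl⟩ := Yel_eq hcd hcd' e.2
    funext i
    rw [hrec i, hrec' i]

end S15

theorem stmt15 (p n : ℕ) (hp : 1 ≤ p) (hn : 3 ≤ n) :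
    A p n n * A p n (n - 2) ≤ A p n (n - 1) ^ 2 := by
  have hA : A p n n = 1 := S15.A_nn p n
  obtain ⟨F, hinj⟩ := S15.exists_inj p n hn
  have hle : Nat.card (S15.Tup p n (n - 2)) ≤
      Nat.card (S15.Tup p n (n - 1) × S15.Tup p n (n - 1)) :=
    Nat.card_le_card_of_injective F hinj
  rw [Nat.card_prod] at hle
  calc A p n n * A p n (n - 2) = A p n (n - 2) := by rw [hA, one_mul]
    _ ≤ A p n (n - 1) * A p n (n - 1) := hle
    _ = A p n (n - 1) ^ 2 := (pow_two _).symm
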